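/- For every real number w, the improper oscillatory integrals defining the complete Airy and Gairy functions converge: the limits lim_{Z → ∞} ∫₀^{Z} cos( −w z + z³/3 ) dz and lim_{Z → ∞} ∫₀^{Z} sin( −w z + z³/3 ) dz exist (and are finite). Hence the complete functions Ai(−w) and Gi(−w), defined as 1/π times these limits, are well defined, and the incomplete Airy and Gairy integrals Ai(−w, 0, Z), Gi(−w, 0, Z) converge to them as Z → ∞. -/

import Mathlib

open Filter MeasureTheory intervalIntegral Set

set_option maxHeartbeats 1000000

private lemma phi_hasDeriv (w z : ℝ) :
    HasDerivAt (fun z : ℝ => -w * z + z ^ 3 / 3) (z ^ 2 - w) z := by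
  have h : HasDerivAt (fun z : ℝ => -w * z + z ^ 3 / 3)
      (-w * 1 + ((3 : ℕ) * z ^ 2) / 3) z :=
    ((hasDerivAt_id z).const_mul (-w)).add ((hasDerivAt_pow 3 z).div_const 3)
  convert h using 1
  push_cast
  ring

private lemma oscillatory_converge (w : ℝ) (f g : ℝ → ℝ)
    (hderiv : ∀ x, HasDerivAt f (g x) x) (hf : ∀ x, |f x| ≤ 1)
    (hgc : Continuous g) :
    ∃ A : ℝ, Tendsto (fun Z : ℝ => ∫ z in (0:ℝ)..Z, g (-w * z + z ^ 3 / 3))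
      atTop (nhds A) := by
  set φ : ℝ → ℝ := fun z => -w * z + z ^ 3 / 3 with hφ
  set c : ℝ := |w| + 2 with hcdef
  have hc1 : (1 : ℝ) ≤ c := by have := abs_nonneg w; linarith
  have hc0 : (0 : ℝ) < c := by linarith
  have hzw : ∀ z : ℝ, c ≤ z → z ≤ z ^ 2 - w := by
    intro z hz
    have h1 : |w| ≤ w ∨ w ≤ |w| := Or.inr (le_abs_self w)
    nlinarith [le_abs_self w, abs_nonneg w]
  have hzw2 : ∀ z : ℝ, c ≤ z → z ^ 2 / 2 ≤ z ^ 2 - w := by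
    intro z hz
    nlinarith [le_abs_self w, abs_nonneg w]
  have hpos : ∀ z : ℝ, c ≤ z → 0 < z ^ 2 - w := fun z hz =>
    lt_of_lt_of_le (by linarith) (hzw z hz)
  -- the boundary and remainder pieces
  set F : ℝ → ℝ := fun z => f (φ z) with hF
  set u : ℝ → ℝ := fun z => (z ^ 2 - w)⁻¹ with hu
  set u' : ℝ → ℝ := fun z => -(2 * z) / (z ^ 2 - w) ^ 2 with hu'
  have huderiv : ∀ z : ℝ, c ≤ z → HasDerivAt u (u' z) z := by
    intro z hz
    have h1 : HasDerivAt (fun z : ℝ => z ^ 2 - w) (2 * z) z := by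
      have := (hasDerivAt_pow 2 z).sub_const w
      exact this.congr_deriv (by push_cast; ring)
    exact h1.inv (ne_of_gt (hpos z hz))
  have hFderiv : ∀ z : ℝ, HasDerivAt F ((z ^ 2 - w) * g (φ z)) z := by
    intro z
    have := (hderiv (φ z)).comp z (phi_hasDeriv w z)
    exact this.congr_deriv (by ring)
  have hgφcont : Continuous fun z => g (φ z) := by
    exact hgc.comp (by continuity)
  -- integrability of the remainder integrand on Ioi c
  have hcontOn : ContinuousOn (fun z => u' z * F z) (Ici c) := by
    apply ContinuousOn.mul
    · apply ContinuousOn.div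
      · exact (by continuity : Continuous fun z : ℝ => -(2*z)).continuousOn
      · exact (((continuous_pow 2).sub continuous_const).pow 2).continuousOn
      · intro z hz
        exact pow_ne_zero 2 (ne_of_gt (hpos z hz))
    · have hfcont : Continuous f := continuous_iff_continuousAt.2 fun x => (hderiv x).continuousAt
      exact (hfcont.comp (by continuity : Continuous φ)).continuousOn
  have hbound : ∀ z ∈ Ioi c, ‖u' z * F z‖ ≤ 8 * z ^ (-3 : ℝ) := by
    intro z hz
    have hz' : c ≤ z := le_of_lt hz
    have hz0 : 0 < z := lt_of_lt_of_le hc0 hz'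
    have h2 : z ^ 2 / 2 ≤ z ^ 2 - w := hzw2 z hz'
    have h3 : (z ^ 2 / 2) ^ 2 ≤ (z ^ 2 - w) ^ 2 := by
      apply pow_le_pow_left₀ (by positivity) h2
    have h4 : |u' z * F z| = (2 * z) / (z ^ 2 - w) ^ 2 * |F z| := by
      rw [abs_mul, hu']
      congr 1
      rw [abs_div, abs_neg, abs_of_nonneg (by positivity : (0:ℝ) ≤ 2 * z),
        abs_of_nonneg (by positivity : (0:ℝ) ≤ (z ^ 2 - w) ^ 2)]
    rw [Real.norm_eq_abs, h4]
    have h5 : (2 * z) / (z ^ 2 - w) ^ 2 * |F z| ≤ (2 * z) / (z ^ 2 - w) ^ 2 * 1 := by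
      apply mul_le_mul_of_nonneg_left (hf _) (by positivity)
    have h6 : (2 * z) / (z ^ 2 - w) ^ 2 ≤ (2 * z) / ((z ^ 2 / 2) ^ 2) := by
      apply div_le_div_of_nonneg_left (by positivity) (by positivity) h3
    have h7 : (2 * z) / ((z ^ 2 / 2) ^ 2) = 8 * z ^ (-3 : ℝ) := by
      rw [Real.rpow_neg (le_of_lt hz0)]
      rw [show ((3:ℝ)) = ((3:ℕ):ℝ) by norm_num, Real.rpow_natCast]
      field_simp
      ring
    linarith
  have hInt : IntegrableOn (fun z => u' z * F z) (Ioi c) := by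
    apply MeasureTheory.Integrable.mono' (g := fun z => 8 * z ^ (-3 : ℝ))
    · exact (integrableOn_Ioi_rpow_of_lt (by norm_num) hc0).const_mul 8
    · exact ((hcontOn.mono (Ioi_subset_Ici le_rfl)).aestronglyMeasurable measurableSet_Ioi)
    · exact (ae_restrict_iff' measurableSet_Ioi).2 (ae_of_all _ hbound)
  set I : ℝ := ∫ z in Ioi c, u' z * F z with hI
  have h1 : Tendsto (fun Z : ℝ => ∫ z in c..Z, u' z * F z) atTop (nhds I) :=
    intervalIntegral_tendsto_integral_Ioi c hInt tendsto_id
  have h2 : Tendsto (fun Z : ℝ => u Z * F Z) atTop (nhds 0) := by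
    refine squeeze_zero_norm' (a := fun Z : ℝ => Z⁻¹) ?_ tendsto_inv_atTop_zero
    · filter_upwards [eventually_ge_atTop c] with Z hZ
      have hZ0 : 0 < Z := lt_of_lt_of_le hc0 hZ
      have : ‖u Z * F Z‖ ≤ |u Z| * 1 := by
        rw [norm_mul]
        exact mul_le_mul_of_nonneg_left (hf _) (abs_nonneg _)
      rw [mul_one] at this
      refine le_trans this ?_
      rw [abs_of_nonneg (le_of_lt (inv_pos.2 (hpos Z hZ)))]
      exact inv_anti₀ hZ0 (hzw Z hZ)
  -- integration by parts identity for Z ≥ c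
  have hIBP : ∀ Z : ℝ, c ≤ Z →
      (∫ z in c..Z, g (φ z)) = u Z * F Z - u c * F c - ∫ z in c..Z, u' z * F z := by
    intro Z hZ
    have huIcc : Set.uIcc c Z = Icc c Z := uIcc_of_le hZ
    have hkey : ∫ z in c..Z, u z * ((z ^ 2 - w) * g (φ z))
        = u Z * F Z - u c * F c - ∫ z in c..Z, u' z * F z := by
      apply intervalIntegral.integral_mul_deriv_eq_deriv_mul
      · intro x hx
        rw [huIcc] at hx
        exact huderiv x hx.1
      · intro x _
        exact hFderiv x
      · apply ContinuousOn.intervalIntegrable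
        rw [huIcc]
        apply ContinuousOn.div
        · exact (by continuity : Continuous fun z : ℝ => -(2*z)).continuousOn
        · exact (((continuous_pow 2).sub continuous_const).pow 2).continuousOn
        · intro z hz
          exact pow_ne_zero 2 (ne_of_gt (hpos z hz.1))
      · exact (((continuous_pow 2).sub continuous_const).mul hgφcont).intervalIntegrable c Z
    rw [← hkey]
    apply intervalIntegral.integral_congr
    intro z hz
    rw [huIcc] at hz
    have : z ^ 2 - w ≠ 0 := ne_of_gt (hpos z hz.1)
    simp only [u]
    field_simp
  refine ⟨(∫ z in (0:ℝ)..c, g (φ z)) + (0 - u c * F c - I), ?_⟩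
  have h3 : Tendsto (fun Z : ℝ => (∫ z in (0:ℝ)..c, g (φ z)) + (∫ z in c..Z, g (φ z)))
      atTop (nhds ((∫ z in (0:ℝ)..c, g (φ z)) + (0 - u c * F c - I))) := by
    apply Tendsto.const_add
    have h4 : Tendsto (fun Z : ℝ => u Z * F Z - u c * F c - ∫ z in c..Z, u' z * F z)
        atTop (nhds (0 - u c * F c - I)) := ((h2.sub tendsto_const_nhds).sub h1)
    apply h4.congr'
    filter_upwards [eventually_ge_atTop c] with Z hZ
    exact (hIBP Z hZ).symm
  apply h3.congr
  intro Z
  exact intervalIntegral.integral_add_adjacent_intervals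
    (hgφcont.intervalIntegrable 0 c) (hgφcont.intervalIntegrable c Z)

/-- Convergence of the improper oscillatory integrals defining the complete
Airy and Gairy functions: for every real `w`, the limits
`lim_{Z→∞} ∫₀^Z cos(−wz + z³/3) dz` and `lim_{Z→∞} ∫₀^Z sin(−wz + z³/3) dz`
exist and are finite, so `Ai(−w)` and `Gi(−w)` are well defined and the
incomplete Airy and Gairy integrals converge to them as `Z → ∞`. -/
theorem airy_gairy_integrals_converge (w : ℝ) :
    (∃ A : ℝ, Filter.Tendsto
        (fun Z : ℝ => ∫ z in (0 : ℝ)..Z, Real.cos (-w * z + z ^ 3 / 3))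
        Filter.atTop (nhds A))
    ∧ (∃ G : ℝ, Filter.Tendsto
        (fun Z : ℝ => ∫ z in (0 : ℝ)..Z, Real.sin (-w * z + z ^ 3 / 3))
        Filter.atTop (nhds G)) := by
  constructor
  · exact oscillatory_converge w Real.sin Real.cos
      (fun x => Real.hasDerivAt_sin x) (fun x => Real.abs_sin_le_one x)
      Real.continuous_cos
  · refine oscillatory_converge w (fun x => -Real.cos x) Real.sin ?_ ?_
      Real.continuous_sin
    · intro x
      exact (Real.hasDerivAt_cos x).neg.congr_deriv (neg_neg _)
    · intro x
      rw [abs_neg]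
      exact Real.abs_cos_le_one x
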